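/- Let 0 < p < ∞, 0 < q < ∞ and let d ≥ 2 be an integer. For every natural number k, the entropy numbers satisfy e_k(S_p^{d−1}, ℓ_q^d) ≥ e_k(B_p^{d−1}, ℓ_q^{d−1}), where B_p^{d−1} is the unit p-ball in ℝ^{d−1}. -/

import Mathlib

open scoped Pointwise BigOperators

/-- The `ℓ_p` (quasi-)norm on `ℝ^d` for `0 < p < ∞`. -/
noncomputable def pNorm (p : ℝ) {d : ℕ} (x : Fin d → ℝ) : ℝ :=
  (∑ i, |x i| ^ p) ^ (1 / p)

/-- The `ℓ_∞` norm on `ℝ^d`. -/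
noncomputable def supNorm {d : ℕ} (x : Fin d → ℝ) : ℝ :=
  ⨆ i, |x i|

/-- The closed unit ball of `ℓ_p^d`. -/
def pBall (p : ℝ) (d : ℕ) : Set (Fin d → ℝ) := {x | pNorm p x ≤ 1}

/-- The unit sphere of `ℓ_p^d`. -/
def pSphere (p : ℝ) (d : ℕ) : Set (Fin d → ℝ) := {x | pNorm p x = 1}

/-- The closed unit ball of `ℓ_∞^d`. -/
def supBall (d : ℕ) : Set (Fin d → ℝ) := {x | supNorm x ≤ 1}

/-- The `k`-th (dyadic) entropy number of `K` with respect to the "unit ball" `B`: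
the infimum of all `ε > 0` such that `K` can be covered by `2^(k-1)` translates of `ε • B`. -/
noncomputable def entropyNumber {d : ℕ} (K B : Set (Fin d → ℝ)) (k : ℕ) : ℝ :=
  sInf {ε : ℝ | 0 < ε ∧ ∃ c : Fin (2 ^ (k - 1)) → (Fin d → ℝ),
    K ⊆ ⋃ j, (c j +ᵥ ε • B)}

lemma sum_rpow_nonneg {d : ℕ} (p : ℝ) (x : Fin d → ℝ) : 0 ≤ ∑ i, |x i| ^ p :=
  Finset.sum_nonneg fun i _ => Real.rpow_nonneg (abs_nonneg _) _

lemma pNorm_nonneg {d : ℕ} (p : ℝ) (x : Fin d → ℝ) : 0 ≤ pNorm p x :=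
  Real.rpow_nonneg (sum_rpow_nonneg p x) _

lemma rpow_inv_le_one_iff {p S : ℝ} (hp : 0 < p) (hS : 0 ≤ S) :
    S ^ (1 / p) ≤ 1 ↔ S ≤ 1 := by
  constructor
  · intro h
    have := Real.rpow_le_rpow (Real.rpow_nonneg hS _) h hp.le
    rwa [← Real.rpow_mul hS, one_div, inv_mul_cancel₀ hp.ne', Real.rpow_one,
      Real.one_rpow] at this
  · intro h
    calc S ^ (1 / p) ≤ 1 ^ (1 / p) :=
          Real.rpow_le_rpow hS h (by positivity)
      _ = 1 := Real.one_rpow _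

lemma pNorm_le_one_iff {d : ℕ} {p : ℝ} (hp : 0 < p) {x : Fin d → ℝ} :
    pNorm p x ≤ 1 ↔ ∑ i, |x i| ^ p ≤ 1 :=
  rpow_inv_le_one_iff hp (sum_rpow_nonneg p x)

lemma pNorm_smul {d : ℕ} {p c : ℝ} (hp : 0 < p) (hc : 0 ≤ c) (x : Fin d → ℝ) :
    pNorm p (c • x) = c * pNorm p x := by
  unfold pNorm
  have h1 : ∀ i, |(c • x) i| ^ p = c ^ p * |x i| ^ p := by
    intro i
    rw [Pi.smul_apply, smul_eq_mul, abs_mul, abs_of_nonneg hc,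
      Real.mul_rpow hc (abs_nonneg _)]
  simp_rw [h1, ← Finset.mul_sum]
  rw [Real.mul_rpow (by positivity) (sum_rpow_nonneg p x), ← Real.rpow_mul hc,
    mul_one_div, div_self hp.ne', Real.rpow_one]

theorem entropy_pSphere_ge_ball (p q : ℝ) (hp : 0 < p) (hq : 0 < q)
    (d : ℕ) (hd : 2 ≤ d) (k : ℕ) :
    entropyNumber (pBall p (d - 1)) (pBall q (d - 1)) k ≤
      entropyNumber (pSphere p d) (pBall q d) k := by
  obtain ⟨m, rfl⟩ : ∃ m, d = m + 1 := ⟨d - 1, by omega⟩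
  show entropyNumber (pBall p m) (pBall q m) k ≤
      entropyNumber (pSphere p (m + 1)) (pBall q (m + 1)) k
  unfold entropyNumber
  apply csInf_le_csInf
  · exact ⟨0, fun ε hε => hε.1.le⟩
  · -- nonemptiness of the sphere covering set
    set ε₀ : ℝ := ((m : ℝ) + 1) ^ (1 / q) with hε₀def
    have hε₀ : 0 < ε₀ := Real.rpow_pos_of_pos (by positivity) _
    refine ⟨ε₀, hε₀, fun _ => 0, fun x hx => ?_⟩
    have hx1 : ∑ i, |x i| ^ p = 1 := by
      have := hx
      simp only [pSphere, Set.mem_setOf_eq, pNorm] at this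
      have h2 := congrArg (· ^ p) this
      rwa [← Real.rpow_mul (sum_rpow_nonneg p x), one_div,
        inv_mul_cancel₀ hp.ne', Real.rpow_one, Real.one_rpow] at h2
    have habs : ∀ i, |x i| ≤ 1 := by
      intro i
      by_contra h
      push_neg at h
      have h1 : (1 : ℝ) < |x i| ^ p := Real.one_lt_rpow_iff_of_pos (by linarith) |>.mpr (Or.inl ⟨h, hp⟩)
      have h2 : |x i| ^ p ≤ ∑ j, |x j| ^ p :=
        Finset.single_le_sum (fun j _ => Real.rpow_nonneg (abs_nonneg _) _) (Finset.mem_univ i)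
      linarith [hx1]
    have hnorm : pNorm q x ≤ ε₀ := by
      unfold pNorm
      apply Real.rpow_le_rpow (sum_rpow_nonneg q x) _ (by positivity)
      calc ∑ i, |x i| ^ q ≤ ∑ _i : Fin (m + 1), (1 : ℝ) :=
            Finset.sum_le_sum fun i _ => by
              calc |x i| ^ q ≤ 1 ^ q := Real.rpow_le_rpow (abs_nonneg _) (habs i) hq.le
                _ = 1 := Real.one_rpow _
        _ = (m : ℝ) + 1 := by rw [Finset.sum_const, Finset.card_univ, Fintype.card_fin, nsmul_eq_mul]; push_cast; ring
    refine Set.mem_iUnion.mpr ⟨⟨0, Nat.pow_pos (by norm_num)⟩, ?_⟩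
    rw [zero_vadd]
    refine Set.mem_smul_set.mpr ⟨ε₀⁻¹ • x, ?_, ?_⟩
    · show pNorm q (ε₀⁻¹ • x) ≤ 1
      rw [pNorm_smul hq (by positivity)]
      calc ε₀⁻¹ * pNorm q x ≤ ε₀⁻¹ * ε₀ := by
            apply mul_le_mul_of_nonneg_left hnorm (by positivity)
        _ = 1 := inv_mul_cancel₀ hε₀.ne'
    · rw [smul_smul, mul_inv_cancel₀ hε₀.ne', one_smul]
  · -- subset: sphere covers give ball covers
    rintro ε ⟨hε, c, hc⟩
    refine ⟨hε, fun j i => c j i.castSucc, fun x hx => ?_⟩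
    have hxS : ∑ i, |x i| ^ p ≤ 1 := (pNorm_le_one_iff hp).mp hx
    set S := ∑ i, |x i| ^ p with hSdef
    have hS0 : 0 ≤ S := sum_rpow_nonneg p x
    set t : ℝ := (1 - S) ^ (1 / p) with htdef
    have ht0 : 0 ≤ t := Real.rpow_nonneg (by linarith) _
    set y : Fin (m + 1) → ℝ := Fin.snoc x t with hydef
    have hy : y ∈ pSphere p (m + 1) := by
      show pNorm p y = 1
      unfold pNorm
      rw [Fin.sum_univ_castSucc]
      have h1 : ∀ i : Fin m, |y i.castSucc| ^ p = |x i| ^ p := by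
        intro i; rw [hydef, Fin.snoc_castSucc]
      have h2 : |y (Fin.last m)| ^ p = 1 - S := by
        rw [hydef, Fin.snoc_last, abs_of_nonneg ht0, htdef,
          ← Real.rpow_mul (by linarith), one_div, inv_mul_cancel₀ hp.ne', Real.rpow_one]
      rw [Finset.sum_congr rfl fun i _ => h1 i, h2, ← hSdef]
      simp [Real.one_rpow]
    obtain ⟨j, hj⟩ := Set.mem_iUnion.mp (hc hy)
    obtain ⟨w, hw, hwy⟩ := Set.mem_vadd_set.mp hj
    obtain ⟨z, hz, hzw⟩ := Set.mem_smul_set.mp hw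
    refine Set.mem_iUnion.mpr ⟨j, Set.mem_vadd_set.mpr
      ⟨ε • fun i => z i.castSucc, Set.mem_smul_set.mpr ⟨fun i => z i.castSucc, ?_, rfl⟩, ?_⟩⟩
    · show pNorm q (fun i => z i.castSucc) ≤ 1
      refine le_trans ?_ hz
      unfold pNorm
      apply Real.rpow_le_rpow (sum_rpow_nonneg q _) _ (by positivity)
      rw [Fin.sum_univ_castSucc (f := fun i => |z i| ^ q)]
      exact le_add_of_nonneg_right (Real.rpow_nonneg (abs_nonneg _) _)
    · funext i
      have h3 := congrFun hwy i.castSucc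
      rw [← hzw] at h3
      have hyx : y i.castSucc = x i := by rw [hydef, Fin.snoc_castSucc]
      simp only [Pi.vadd_apply, vadd_eq_add, Pi.add_apply, Pi.smul_apply,
        smul_eq_mul] at h3 ⊢
      rw [← hyx, ← h3]
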